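/- arXiv:1009.2474 — 2 statements merged into one kernel-verified Lean document; each statement's English description precedes it below -/
import Mathlib

section
/- Let K be a field of characteristic different from 2, let N be a positive integer, and let σ and ω be permutations of {1,…,N}. Then the dimension over K of the kernel of the matrix P_ω + P_σ equals the number of cycles of even length in the disjoint cycle decomposition of the permutation τ = σ∘ω⁻¹ (where fixed points count as cycles of length 1, hence are not counted). -/
/-- The permutation matrix of `μ`: `P_μ[i,j] = 1` if `j = μ i` and `0` otherwise;
thus `(P_μ v) i = v (μ i)`. -/
def permMat (K : Type*) [Field K] {N : ℕ} (μ : Equiv.Perm (Fin N)) :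
    Matrix (Fin N) (Fin N) K :=
  Matrix.of fun i j => if j = μ i then 1 else 0

section aux

open Equiv Equiv.Perm

variable {K : Type*} [Field K] {N : ℕ}

lemma neg_one_pow_congr' {a b : ℕ} (h : a % 2 = b % 2) : ((-1 : K)) ^ a = (-1) ^ b := by
  have key : ∀ n : ℕ, ((-1 : K)) ^ n = (-1) ^ (n % 2) := by
    intro n
    conv_lhs => rw [← Nat.div_add_mod n 2]
    rw [pow_add, pow_mul]
    simp
  rw [key a, key b, h]

lemma eq_zero_of_eq_neg (hK : (2 : K) ≠ 0) {a : K} (h : a = -a) : a = 0 := by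
  have h2 : (2 : K) * a = 0 := by linear_combination h
  rcases mul_eq_zero.mp h2 with h' | h'
  · exact absurd h' hK
  · exact h'

lemma pow_apply_of_anti (τ : Equiv.Perm (Fin N)) (v : Fin N → K)
    (hv : ∀ j, v (τ j) = - v j) (k : ℕ) (j : Fin N) :
    v ((τ ^ k) j) = (-1) ^ k * v j := by
  induction k with
  | zero => simp
  | succ n ih =>
    rw [pow_succ', Equiv.Perm.mul_apply, hv, ih, pow_succ]
    ring

lemma vanish_fixed (hK : (2 : K) ≠ 0) (τ : Equiv.Perm (Fin N)) (v : Fin N → K)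
    (hv : ∀ j, v (τ j) = - v j) {x : Fin N} (hx : τ x = x) : v x = 0 := by
  have := hv x
  rw [hx] at this
  exact eq_zero_of_eq_neg hK this

lemma vanish_odd (hK : (2 : K) ≠ 0) (τ : Equiv.Perm (Fin N)) (v : Fin N → K)
    (hv : ∀ j, v (τ j) = - v j) {x : Fin N} (hx : x ∈ τ.support)
    (hodd : ¬ Even ((τ.cycleOf x).support.card) ) : v x = 0 := by
  set m := (τ.cycleOf x).support.card with hm
  have hxs : x ∈ (τ.cycleOf x).support :=
    Equiv.Perm.mem_support_cycleOf_iff.mpr ⟨Equiv.Perm.SameCycle.refl _ _, hx⟩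
  have hper : (τ ^ m) x = x := (τ.isCycleOn_support_cycleOf x).pow_card_apply hxs
  have := pow_apply_of_anti τ v hv m x
  rw [hper, (Nat.not_even_iff_odd.mp hodd).neg_one_pow] at this
  exact eq_zero_of_eq_neg hK (by linear_combination this)

end aux

/-- Over a field of characteristic `≠ 2`, the dimension of the kernel of
`P_ω + P_σ` equals the number of cycles of even length in the disjoint cycle
decomposition of `τ = σ ∘ ω⁻¹` (the cycle type records the lengths of all cycles
of length `≥ 2`, so fixed points — cycles of length 1 — are not counted). -/
theorem finrank_kernel_eq_evenCycles (K : Type*) [Field K] (hK : (2 : K) ≠ 0)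
    (N : ℕ) (hN : 0 < N) (σ ω : Equiv.Perm (Fin N)) :
    Module.finrank K (LinearMap.ker (permMat K ω + permMat K σ).mulVecLin) =
      Multiset.card ((σ * ω⁻¹).cycleType.filter (fun l => Even l)) := by
  classical
  set τ : Equiv.Perm (Fin N) := σ * ω⁻¹ with hτ
  -- kernel membership characterization
  have happ : ∀ (v : Fin N → K) (i : Fin N),
      ((permMat K ω + permMat K σ).mulVecLin v) i = v (ω i) + v (σ i) := by
    intro v i
    simp only [Matrix.mulVecLin_apply, Matrix.mulVec, dotProduct, Matrix.add_apply,
      permMat, Matrix.of_apply, add_mul, ite_mul, one_mul, zero_mul,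
      Finset.sum_add_distrib, Finset.sum_ite_eq', Finset.mem_univ, if_true]
  have hker : ∀ v : Fin N → K,
      v ∈ LinearMap.ker (permMat K ω + permMat K σ).mulVecLin ↔
        ∀ j, v (τ j) = - v j := by
    intro v
    rw [LinearMap.mem_ker, funext_iff]
    constructor
    · intro h j
      have h1 := h (ω⁻¹ j)
      rw [happ, Pi.zero_apply] at h1
      simp only [Equiv.Perm.coe_inv, Equiv.apply_symm_apply] at h1
      have h2 : τ j = σ (ω⁻¹ j) := by simp [hτ, Equiv.Perm.mul_apply]
      rw [h2]
      linear_combination h1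
    · intro h i
      rw [happ, Pi.zero_apply]
      have h2 : τ (ω i) = σ i := by simp [hτ, Equiv.Perm.mul_apply]
      have h3 := h (ω i)
      rw [h2] at h3
      linear_combination h3
  -- the finset of even cycles
  set S : Finset (Equiv.Perm (Fin N)) :=
    τ.cycleFactorsFinset.filter (fun c => Even c.support.card) with hS
  have hSsub : ∀ c ∈ S, c ∈ τ.cycleFactorsFinset := fun c hc =>
    (Finset.mem_filter.mp hc).1
  have hne : ∀ c ∈ S, c.support.Nonempty := by
    intro c hc
    have hcyc : c.IsCycle := (Equiv.Perm.mem_cycleFactorsFinset_iff.mp (hSsub c hc)).1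
    exact Finset.card_pos.mp (lt_of_lt_of_le (by norm_num) hcyc.two_le_card_support)
  let rep : {c // c ∈ S} → Fin N := fun c => c.1.support.min' (hne c.1 c.2)
  have hrep : ∀ c : {c // c ∈ S}, rep c ∈ c.1.support := fun c =>
    Finset.min'_mem _ _
  -- the cycleOf at a rep is the cycle itself
  have hcycrep : ∀ c : {c // c ∈ S}, τ.cycleOf (rep c) = c.1 := fun c =>
    (Equiv.Perm.cycle_is_cycleOf (hrep c) (hSsub c.1 c.2)).symm
  -- forward linear map
  let Φ : (LinearMap.ker (permMat K ω + permMat K σ).mulVecLin) →ₗ[K]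
      ({c // c ∈ S} → K) :=
    { toFun := fun v c => (v : Fin N → K) (rep c)
      map_add' := fun v w => rfl
      map_smul' := fun a v => rfl }
  have hbij : Function.Bijective Φ := by
    constructor
    · rw [← LinearMap.ker_eq_bot, LinearMap.ker_eq_bot']
      intro v hv0
      have hv : ∀ j, (v : Fin N → K) (τ j) = - (v : Fin N → K) j :=
        (hker v).mp v.2
      ext x
      show (v : Fin N → K) x = 0
      by_cases hx : τ x = x
      · exact vanish_fixed hK τ _ hv hx
      · have hxs : x ∈ τ.support := Equiv.Perm.mem_support.mpr hx
        by_cases heven : Even ((τ.cycleOf x).support.card)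
        · -- x lies on an even cycle
          have hcF : τ.cycleOf x ∈ τ.cycleFactorsFinset :=
            Equiv.Perm.cycleOf_mem_cycleFactorsFinset_iff.mpr hxs
          have hcS : τ.cycleOf x ∈ S := Finset.mem_filter.mpr ⟨hcF, heven⟩
          set c : {c // c ∈ S} := ⟨τ.cycleOf x, hcS⟩ with hc
          have hrx : rep c ∈ (τ.cycleOf x).support := hrep c
          have hsame : τ.SameCycle (rep c) x :=
            ((Equiv.Perm.mem_support_cycleOf_iff.mp hrx).1).symm
          have hrsupp : rep c ∈ τ.support :=
            Equiv.Perm.support_cycleOf_le τ x hrx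
          obtain ⟨i, _, hi⟩ := hsame.exists_pow_eq_of_mem_support hrsupp
          have := pow_apply_of_anti τ _ hv i (rep c)
          rw [hi] at this
          have h0 : (v : Fin N → K) (rep c) = 0 := congrFun hv0 c
          rw [this, h0, mul_zero]
        · exact vanish_odd hK τ _ hv hxs heven
    · -- surjectivity
      intro f
      let expo : Fin N → Fin N → ℕ := fun r x =>
        if h : ∃ k, (τ ^ k) r = x then Nat.find h else 0
      have expo_spec : ∀ {r x : Fin N}, (∃ k, (τ ^ k) r = x) →
          (τ ^ (expo r x)) r = x := by
        intro r x h
        simp only [expo, dif_pos h]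
        exact Nat.find_spec h
      let v : Fin N → K := fun x =>
        if h : τ.cycleOf x ∈ S then
          (-1) ^ (expo (rep ⟨τ.cycleOf x, h⟩) x) * f ⟨τ.cycleOf x, h⟩
        else 0
      -- key: v is anti-invariant
      have hv : ∀ j, v (τ j) = - v j := by
        intro j
        by_cases hj : τ j = j
        · have hnot : τ.cycleOf j ∉ S := by
            intro hmem
            exact (Equiv.Perm.mem_support.mp
              (Equiv.Perm.cycleOf_mem_cycleFactorsFinset_iff.mp (hSsub _ hmem))) hj
          have h1 : v j = 0 := dif_neg hnot
          have h2 : v (τ j) = 0 := by rw [hj]; exact h1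
          rw [h1, h2, neg_zero]
        · have hcyc_eq : τ.cycleOf (τ j) = τ.cycleOf j := Equiv.Perm.cycleOf_self_apply τ j
          by_cases hmem : τ.cycleOf j ∈ S
          · have hmem' : τ.cycleOf (τ j) ∈ S := by rw [hcyc_eq]; exact hmem
            have hsub_eq : (⟨τ.cycleOf (τ j), hmem'⟩ : {c // c ∈ S}) = ⟨τ.cycleOf j, hmem⟩ :=
              Subtype.ext hcyc_eq
            have h1 : v (τ j) =
                (-1) ^ (expo (rep ⟨τ.cycleOf j, hmem⟩) (τ j)) * f ⟨τ.cycleOf j, hmem⟩ := by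
              show (if h : τ.cycleOf (τ j) ∈ S then
                  (-1) ^ (expo (rep ⟨τ.cycleOf (τ j), h⟩) (τ j)) * f ⟨τ.cycleOf (τ j), h⟩
                else 0) = _
              rw [dif_pos hmem', hsub_eq]
            have h2 : v j =
                (-1) ^ (expo (rep ⟨τ.cycleOf j, hmem⟩) j) * f ⟨τ.cycleOf j, hmem⟩ :=
              dif_pos hmem
            set c : {c // c ∈ S} := ⟨τ.cycleOf j, hmem⟩ with hc
            set r := rep c with hr
            -- existence of exponents
            have hrx : r ∈ (τ.cycleOf j).support := hrep c
            have hsame : τ.SameCycle r j :=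
              ((Equiv.Perm.mem_support_cycleOf_iff.mp hrx).1).symm
            have hrsupp : r ∈ τ.support := Equiv.Perm.support_cycleOf_le τ j hrx
            obtain ⟨i, _, hi⟩ := hsame.exists_pow_eq_of_mem_support hrsupp
            have hex1 : ∃ k, (τ ^ k) r = j := ⟨i, hi⟩
            have hex2 : ∃ k, (τ ^ k) r = τ j := by
              refine ⟨expo r j + 1, ?_⟩
              rw [pow_succ', Equiv.Perm.mul_apply, expo_spec hex1]
            have ha : (τ ^ (expo r j)) r = j := expo_spec hex1
            have hb : (τ ^ (expo r (τ j))) r = τ j := expo_spec hex2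
            -- cycleOf at r equals cycleOf at j
            have hcr : τ.cycleOf r = τ.cycleOf j :=
              Equiv.Perm.SameCycle.cycleOf_eq hsame
            have hrxx : r ∈ (τ.cycleOf r).support := by rw [hcr]; exact hrx
            have heq : (τ ^ (expo r (τ j))) r = (τ ^ (expo r j + 1)) r := by
              rw [hb, pow_succ']
              exact (congrArg (⇑τ) ha).symm
            have hmodm : expo r (τ j) ≡ expo r j + 1 [MOD (τ.cycleOf r).support.card] :=
              ((τ.isCycleOn_support_cycleOf r).pow_apply_eq_pow_apply hrxx).mp heq
            have heven : Even ((τ.cycleOf r).support.card) := by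
              rw [hcr]
              exact (Finset.mem_filter.mp hmem).2
            have hmod2 : expo r (τ j) % 2 = (expo r j + 1) % 2 :=
              Nat.ModEq.of_dvd heven.two_dvd hmodm
            have hsign : ((-1 : K)) ^ (expo r (τ j)) = (-1) ^ (expo r j + 1) :=
              neg_one_pow_congr' hmod2
            rw [h1, h2, hsign, pow_succ]
            ring
          · have hmem' : τ.cycleOf (τ j) ∉ S := by rw [hcyc_eq]; exact hmem
            have h1 : v (τ j) = 0 := dif_neg hmem'
            have h2 : v j = 0 := dif_neg hmem
            rw [h1, h2, neg_zero]
      refine ⟨⟨v, (hker v).mpr hv⟩, ?_⟩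
      funext c
      show v (rep c) = f c
      have hmem : τ.cycleOf (rep c) ∈ S := by rw [hcycrep c]; exact c.2
      have hsub_eq : (⟨τ.cycleOf (rep c), hmem⟩ : {c // c ∈ S}) = c :=
        Subtype.ext (hcycrep c)
      have h1 : v (rep c) =
          (-1) ^ (expo (rep ⟨τ.cycleOf (rep c), hmem⟩) (rep c)) * f ⟨τ.cycleOf (rep c), hmem⟩ :=
        dif_pos hmem
      rw [h1, hsub_eq]
      have hex : ∃ k, (τ ^ k) (rep c) = rep c := ⟨0, rfl⟩
      have h0 : expo (rep c) (rep c) = 0 := by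
        simp only [expo, dif_pos hex]
        rw [Nat.find_eq_zero]
        rfl
      rw [h0, pow_zero, one_mul]
  -- conclude
  have e := LinearEquiv.ofBijective Φ hbij
  rw [e.finrank_eq, Module.finrank_pi, Fintype.card_coe]
  -- now count
  rw [Equiv.Perm.cycleType_def, Multiset.filter_map]
  rw [Multiset.card_map]
  rw [hS]
  rfl
end

section
/- For every real number s and all nonnegative integers m and n, the mixed partial derivative ∂_x^m ∂_y^n (e^x + e^y − 1)^s evaluated at (x,y) = (0,0) equals Σ_{ℓ=0}^{m} (s)_ℓ · S(m,ℓ) · (s−ℓ)^n, where (s)_ℓ = s(s−1)⋯(s−ℓ+1) is the falling factorial (with (s)_0 = 1) and S(m,ℓ) is the Stirling number of the second kind. -/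
/-- Stirling numbers of the second kind: `stirling2 n k` is the number of
partitions of an `n`-element set into `k` nonempty blocks. -/
def stirling2 : ℕ → ℕ → ℕ
  | 0, 0 => 1
  | 0, _+1 => 0
  | _+1, 0 => 0
  | n+1, k+1 => (k + 1) * stirling2 n (k + 1) + stirling2 n k

/-- The falling factorial `(s)_ℓ = s (s-1) ⋯ (s - ℓ + 1)`, with `(s)_0 = 1`. -/
def fallingFactorial (s : ℝ) (l : ℕ) : ℝ := ∏ i ∈ Finset.range l, (s - i)

lemma ff_succ (s : ℝ) (l : ℕ) :
    fallingFactorial s (l + 1) = fallingFactorial s l * (s - l) := by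
  simp [fallingFactorial, Finset.prod_range_succ]

lemma ff_add (s : ℝ) (k l : ℕ) :
    fallingFactorial s k * fallingFactorial (s - k) l = fallingFactorial s (k + l) := by
  induction l with
  | zero => simp [fallingFactorial]
  | succ l ih =>
      rw [ff_succ, ← mul_assoc, ih, ← add_assoc, ff_succ]
      push_cast
      ring

lemma stirling2_eq_zero {n k : ℕ} (h : n < k) : stirling2 n k = 0 := by
  induction n generalizing k with
  | zero => cases k with
      | zero => omega
      | succ k => rfl
  | succ n ih =>
      cases k with
      | zero => omega
      | succ k =>
          show (k + 1) * stirling2 n (k + 1) + stirling2 n k = 0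
          rw [ih (by omega), ih (by omega)]
          ring

lemma stirling2_expand (m : ℕ) (x : ℝ) :
    x ^ m = ∑ l ∈ Finset.range (m + 1), (stirling2 m l : ℝ) * fallingFactorial x l := by
  induction m with
  | zero => simp [stirling2, fallingFactorial]
  | succ m ih =>
      calc x ^ (m + 1) = x * x ^ m := by ring
        _ = ∑ l ∈ Finset.range (m + 1), (stirling2 m l : ℝ) * (x * fallingFactorial x l) := by
            rw [ih, Finset.mul_sum]; apply Finset.sum_congr rfl; intros; ring
        _ = (∑ l ∈ Finset.range (m + 1), (stirling2 m l : ℝ) * fallingFactorial x (l + 1))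
            + ∑ l ∈ Finset.range (m + 1), (l : ℝ) * (stirling2 m l : ℝ) * fallingFactorial x l := by
            rw [← Finset.sum_add_distrib]; apply Finset.sum_congr rfl; intro l _
            rw [ff_succ]; ring
        _ = (∑ l ∈ Finset.range (m + 1), (stirling2 m l : ℝ) * fallingFactorial x (l + 1))
            + ∑ l ∈ Finset.range (m + 1), ((l : ℝ) + 1) * (stirling2 m (l + 1) : ℝ)
                * fallingFactorial x (l + 1) := by
            congr 1
            rw [Finset.sum_range_succ' (fun l => (l : ℝ) * (stirling2 m l : ℝ) * fallingFactorial x l) m,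
              Finset.sum_range_succ (fun l => ((l : ℝ) + 1) * (stirling2 m (l + 1) : ℝ) * fallingFactorial x (l + 1)) m]
            simp [stirling2_eq_zero (Nat.lt_succ_self m)]
        _ = ∑ l ∈ Finset.range (m + 2), (stirling2 (m + 1) l : ℝ) * fallingFactorial x l := by
            rw [Finset.sum_range_succ' (fun l => (stirling2 (m + 1) l : ℝ) * fallingFactorial x l) (m + 1)]
            have h0 : stirling2 (m + 1) 0 = 0 := rfl
            have hs : ∀ l : ℕ, stirling2 (m + 1) (l + 1) = (l + 1) * stirling2 m (l + 1) + stirling2 m l := fun l => rfl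
            simp only [hs, h0, Nat.cast_zero, zero_mul, add_zero, Nat.cast_add, Nat.cast_mul, Nat.cast_one]
            rw [← Finset.sum_add_distrib]
            rw [add_comm]
            apply Finset.sum_congr rfl; intro l _; ring

lemma stirling2_sum_succ (n : ℕ) (u : ℕ → ℝ) :
    ∑ k ∈ Finset.range (n + 1 + 1), (stirling2 (n + 1) k : ℝ) * u k
      = ∑ k ∈ Finset.range (n + 1), (stirling2 n k : ℝ) * ((k : ℝ) * u k + u (k + 1)) := by
  rw [Finset.sum_range_succ' (fun k => (stirling2 (n + 1) k : ℝ) * u k) (n + 1)]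
  have h0 : stirling2 (n + 1) 0 = 0 := rfl
  have hs : ∀ k : ℕ, stirling2 (n + 1) (k + 1) = (k + 1) * stirling2 n (k + 1) + stirling2 n k :=
    fun _ => rfl
  simp only [hs, h0, Nat.cast_zero, zero_mul, add_zero, Nat.cast_add, Nat.cast_mul, Nat.cast_one]
  have hsplit : ∀ k : ℕ, (((k : ℝ) + 1) * (stirling2 n (k + 1) : ℝ) + (stirling2 n k : ℝ)) * u (k + 1)
      = ((k : ℝ) + 1) * (stirling2 n (k + 1) : ℝ) * u (k + 1) + (stirling2 n k : ℝ) * u (k + 1) := by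
    intro k; ring
  simp only [hsplit]
  rw [Finset.sum_add_distrib]
  have hshift : ∑ k ∈ Finset.range (n + 1), ((k : ℝ) + 1) * (stirling2 n (k + 1) : ℝ) * u (k + 1)
      = ∑ k ∈ Finset.range (n + 1), (k : ℝ) * (stirling2 n k : ℝ) * u k := by
    rw [Finset.sum_range_succ' (fun k => (k : ℝ) * (stirling2 n k : ℝ) * u k) n,
      Finset.sum_range_succ (fun k => ((k : ℝ) + 1) * (stirling2 n (k + 1) : ℝ) * u (k + 1)) n]
    simp [stirling2_eq_zero (Nat.lt_succ_self n)]
  rw [hshift, ← Finset.sum_add_distrib]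
  apply Finset.sum_congr rfl; intro k _; ring

lemma inner_deriv (s c : ℝ) (n : ℕ) :
    ∀ y : ℝ, 0 < c + Real.exp y →
      iteratedDeriv n (fun y => (c + Real.exp y) ^ s) y
        = ∑ k ∈ Finset.range (n + 1), (stirling2 n k : ℝ) * fallingFactorial s k
            * (Real.exp ((k : ℝ) * y) * (c + Real.exp y) ^ (s - k)) := by
  induction n with
  | zero =>
      intro y hy
      simp [stirling2, fallingFactorial]
  | succ n ih =>
      intro y hy
      have hopen : IsOpen {y : ℝ | 0 < c + Real.exp y} :=
        isOpen_lt continuous_const (by continuity)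
      have hev : iteratedDeriv n (fun y => (c + Real.exp y) ^ s) =ᶠ[nhds y]
          (fun y => ∑ k ∈ Finset.range (n + 1), (stirling2 n k : ℝ) * fallingFactorial s k
            * (Real.exp ((k : ℝ) * y) * (c + Real.exp y) ^ (s - k))) :=
        Filter.eventually_of_mem (hopen.mem_nhds hy) (fun z hz => ih z hz)
      rw [iteratedDeriv_succ, hev.deriv_eq]
      have hterm : ∀ k ∈ Finset.range (n + 1),
          HasDerivAt (fun y => (stirling2 n k : ℝ) * fallingFactorial s k
              * (Real.exp ((k : ℝ) * y) * (c + Real.exp y) ^ (s - k)))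
            ((stirling2 n k : ℝ) * fallingFactorial s k
              * ((k : ℝ) * Real.exp ((k : ℝ) * y) * (c + Real.exp y) ^ (s - k)
                + Real.exp ((k : ℝ) * y) * (Real.exp y * (s - k) * (c + Real.exp y) ^ (s - k - 1)))) y := by
        intro k _
        have hky : HasDerivAt (fun y : ℝ => (k : ℝ) * y) (k : ℝ) y := by
          simpa using (hasDerivAt_id y).const_mul (k : ℝ)
        have h1 : HasDerivAt (fun y : ℝ => Real.exp ((k : ℝ) * y))
            (Real.exp ((k : ℝ) * y) * (k : ℝ)) y := hky.exp
        have hb : HasDerivAt (fun y : ℝ => c + Real.exp y) (Real.exp y) y :=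
          (Real.hasDerivAt_exp y).const_add c
        have h2 : HasDerivAt (fun y : ℝ => (c + Real.exp y) ^ (s - k))
            (Real.exp y * (s - k) * (c + Real.exp y) ^ (s - k - 1)) y :=
          hb.rpow_const (Or.inl (ne_of_gt hy))
        have := (h1.mul h2).const_mul ((stirling2 n k : ℝ) * fallingFactorial s k)
        refine this.congr_deriv ?_
        ring
      rw [HasDerivAt.deriv (HasDerivAt.fun_sum hterm)]
      simp only [mul_assoc]
      rw [stirling2_sum_succ n (fun k => fallingFactorial s k
        * (Real.exp ((k : ℝ) * y) * (c + Real.exp y) ^ (s - k)))]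
      apply Finset.sum_congr rfl
      intro k _
      rw [ff_succ]
      push_cast
      rw [add_mul, one_mul, Real.exp_add]
      ring

lemma exp_sum_iteratedDeriv (m N : ℕ) (a b : ℕ → ℝ) :
    iteratedDeriv m (fun x : ℝ => ∑ k ∈ Finset.range N, a k * Real.exp (b k * x))
      = fun x : ℝ => ∑ k ∈ Finset.range N, a k * b k ^ m * Real.exp (b k * x) := by
  induction m with
  | zero => simp [iteratedDeriv_zero]
  | succ m ih =>
      rw [iteratedDeriv_succ, ih]
      funext x
      have hterm : ∀ k ∈ Finset.range N,
          HasDerivAt (fun x : ℝ => a k * b k ^ m * Real.exp (b k * x))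
            (a k * b k ^ (m + 1) * Real.exp (b k * x)) x := by
        intro k _
        have hbx : HasDerivAt (fun x : ℝ => b k * x) (b k) x := by
          simpa using (hasDerivAt_id x).const_mul (b k)
        have := hbx.exp.const_mul (a k * b k ^ m)
        refine this.congr_deriv ?_
        ring
      exact HasDerivAt.deriv (HasDerivAt.fun_sum hterm)

lemma stirling_symm (s : ℝ) (m n : ℕ) :
    ∑ k ∈ Finset.range (n + 1), (stirling2 n k : ℝ) * fallingFactorial s k * (s - k) ^ m
      = ∑ l ∈ Finset.range (m + 1), fallingFactorial s l * (stirling2 m l : ℝ) * (s - l) ^ n := by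
  calc ∑ k ∈ Finset.range (n + 1), (stirling2 n k : ℝ) * fallingFactorial s k * (s - k) ^ m
      = ∑ k ∈ Finset.range (n + 1), ∑ l ∈ Finset.range (m + 1),
          (stirling2 n k : ℝ) * (stirling2 m l : ℝ) * fallingFactorial s (k + l) := by
        apply Finset.sum_congr rfl; intro k _
        rw [stirling2_expand m (s - k), Finset.mul_sum]
        apply Finset.sum_congr rfl; intro l _
        rw [← ff_add s k l]; ring
    _ = ∑ l ∈ Finset.range (m + 1), ∑ k ∈ Finset.range (n + 1),
          (stirling2 n k : ℝ) * (stirling2 m l : ℝ) * fallingFactorial s (k + l) :=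
        Finset.sum_comm
    _ = ∑ l ∈ Finset.range (m + 1), fallingFactorial s l * (stirling2 m l : ℝ) * (s - l) ^ n := by
        apply Finset.sum_congr rfl; intro l _
        rw [stirling2_expand n (s - l), Finset.mul_sum]
        apply Finset.sum_congr rfl; intro k _
        rw [add_comm k l, ← ff_add s l k]; ring

/-- `∂_x^m ∂_y^n (e^x + e^y - 1)^s` at `(x,y) = (0,0)` equals
`Σ_{ℓ=0}^{m} (s)_ℓ S(m,ℓ) (s-ℓ)^n`, where the power on the left-hand side is
the real power `a ^ b = exp (b * log a)`. -/
theorem mixed_deriv_exp_add_exp_sub_one_rpow (s : ℝ) (m n : ℕ) :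
    iteratedDeriv m (fun x : ℝ =>
        iteratedDeriv n (fun y : ℝ => (Real.exp x + Real.exp y - 1) ^ s) 0) 0 =
      ∑ l ∈ Finset.range (m + 1),
        fallingFactorial s l * (stirling2 m l : ℝ) * (s - l) ^ n := by
  have hG : (fun x : ℝ => iteratedDeriv n (fun y : ℝ => (Real.exp x + Real.exp y - 1) ^ s) 0)
      = fun x : ℝ => ∑ k ∈ Finset.range (n + 1),
          ((stirling2 n k : ℝ) * fallingFactorial s k) * Real.exp ((s - k) * x) := by
    funext x
    have hfun : (fun y : ℝ => (Real.exp x + Real.exp y - 1) ^ s)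
        = fun y : ℝ => ((Real.exp x - 1) + Real.exp y) ^ s := by
      funext y; congr 1; ring
    have hpos : 0 < (Real.exp x - 1) + Real.exp 0 := by
      simp [Real.exp_pos x]
    rw [hfun, inner_deriv s (Real.exp x - 1) n 0 hpos]
    apply Finset.sum_congr rfl
    intro k _
    have hbase : Real.exp x - 1 + Real.exp 0 = Real.exp x := by simp
    rw [hbase, mul_zero, Real.exp_zero, one_mul, mul_comm (s - (k : ℝ)) x, Real.exp_mul]
  rw [hG, exp_sum_iteratedDeriv m (n + 1) (fun k => (stirling2 n k : ℝ) * fallingFactorial s k)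
    (fun k => s - k)]
  simp only [mul_zero, Real.exp_zero, mul_one]
  exact stirling_symm s m n
end
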